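/- arXiv:1512.04741 — 4 statements merged into one kernel-verified Lean document; each statement's English description precedes it below -/
import Mathlib

section
/- Let S0 > 0, K > 0, μ ∈ ℝ, t > 0, V > 0 and let ℓ be the lognormal density ℓ(x) = (1/(√(2π)·x·V))·exp(−(ln(x/S0) − μ·t + V²/2)²/(2V²)). Then ∫₀^∞ max(x − K, 0)·ℓ(x) dx = S0·e^{μt}·Φ(d₁) − K·Φ(d₂), where Φ(y) = ∫_{−∞}^{y} (1/√(2π))·e^{−u²/2} du is the standard normal cumulative distribution function, d₁ = (ln(S0/K) + μt + V²/2)/V and d₂ = d₁ − V. -/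
open Real MeasureTheory

/-- The standard normal cumulative distribution function. -/
noncomputable def stdNormalCDF (y : ℝ) : ℝ :=
  ∫ u in Set.Iic y, (1 / Real.sqrt (2 * Real.pi)) * Real.exp (-u ^ 2 / 2)

lemma gauss_integrable {V : ℝ} (hV : 0 < V) (b : ℝ) :
    Integrable fun z : ℝ => Real.exp (-(z - b) ^ 2 / (2 * V ^ 2)) := by
  have h : (0:ℝ) < 1 / (2 * V ^ 2) := by positivity
  have := (integrable_exp_neg_mul_sq h).comp_sub_right b
  convert this using 2 with z
  field_simp

lemma gauss_integral_Ioi {V : ℝ} (hV : 0 < V) (L b : ℝ) :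
    ∫ z in Set.Ioi L, (1 / (Real.sqrt (2 * Real.pi) * V)) * Real.exp (-(z - b) ^ 2 / (2 * V ^ 2))
      = stdNormalCDF ((b - L) / V) := by
  have hd : ∀ u : ℝ, HasDerivAt (fun u : ℝ => b - V * u) (-V) u := by
    intro u
    simpa using ((hasDerivAt_id u).const_mul V).const_sub b
  have himg : (fun u : ℝ => b - V * u) '' Set.Iic ((b - L) / V) = Set.Ici L := by
    ext z
    simp only [Set.mem_image, Set.mem_Iic, Set.mem_Ici]
    constructor
    · rintro ⟨u, hu, rfl⟩
      have := (le_div_iff₀ hV).mp hu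
      nlinarith
    · intro hz
      exact ⟨(b - z) / V, by rw [div_le_div_iff_of_pos_right hV]; linarith,
        by field_simp; ring⟩
  rw [← MeasureTheory.integral_Ici_eq_integral_Ioi, ← himg,
    integral_image_eq_integral_abs_deriv_smul measurableSet_Iic
      (fun u _ => (hd u).hasDerivWithinAt)
      (fun u _ v _ h => by
        have h' : b - V * u = b - V * v := h
        exact mul_left_cancel₀ hV.ne' (by linarith))]
  unfold stdNormalCDF
  refine setIntegral_congr_fun measurableSet_Iic fun u _ => ?_
  rw [abs_neg, abs_of_pos hV, smul_eq_mul]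
  have h1 : -(b - V * u - b) ^ 2 / (2 * V ^ 2) = -u ^ 2 / 2 := by
    field_simp; ring
  rw [h1]
  field_simp

/-- The undiscounted price of a European call under the lognormal density is given by
the (undiscounted) Black–Scholes formula. -/
theorem lognormal_call_price_black_scholes
    (S0 K μ t V : ℝ) (hS0 : 0 < S0) (hK : 0 < K) (ht : 0 < t) (hV : 0 < V) :
    ∫ x in Set.Ioi (0 : ℝ),
      max (x - K) 0 * ((1 / (Real.sqrt (2 * Real.pi) * x * V)) *
        Real.exp (-(Real.log (x / S0) - μ * t + V ^ 2 / 2) ^ 2 / (2 * V ^ 2))) =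
      S0 * Real.exp (μ * t) * stdNormalCDF ((Real.log (S0 / K) + μ * t + V ^ 2 / 2) / V)
        - K * stdNormalCDF ((Real.log (S0 / K) + μ * t + V ^ 2 / 2) / V - V) := by
  set m : ℝ := Real.log S0 + μ * t - V ^ 2 / 2 with hm
  set L : ℝ := Real.log K with hL
  set c : ℝ := 1 / (Real.sqrt (2 * Real.pi) * V) with hc
  have hIoi : Set.Ioi (0:ℝ) = Real.exp '' Set.univ := by
    rw [Set.image_univ, Real.range_exp]
  rw [hIoi, integral_image_eq_integral_abs_deriv_smul MeasurableSet.univ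
      (fun x _ => (Real.hasDerivAt_exp x).hasDerivWithinAt)
      Real.exp_injective.injOn, Measure.restrict_univ]
  have key : ∀ z : ℝ,
      |Real.exp z| • (max (Real.exp z - K) 0 * ((1 / (Real.sqrt (2 * Real.pi) * Real.exp z * V)) *
        Real.exp (-(Real.log (Real.exp z / S0) - μ * t + V ^ 2 / 2) ^ 2 / (2 * V ^ 2))))
      = Set.indicator (Set.Ioi L)
          (fun z => Real.exp (m + V ^ 2 / 2) * (c * Real.exp (-(z - (m + V ^ 2)) ^ 2 / (2 * V ^ 2)))
            - K * (c * Real.exp (-(z - m) ^ 2 / (2 * V ^ 2)))) z := by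
    intro z
    have hlog : Real.log (Real.exp z / S0) = z - Real.log S0 := by
      rw [Real.log_div (Real.exp_ne_zero z) hS0.ne', Real.log_exp]
    have hexp : Real.log (Real.exp z / S0) - μ * t + V ^ 2 / 2 = z - m := by
      rw [hlog, hm]; ring
    have hsq : Real.exp z * Real.exp (-(z - m) ^ 2 / (2 * V ^ 2))
        = Real.exp (m + V ^ 2 / 2) * Real.exp (-(z - (m + V ^ 2)) ^ 2 / (2 * V ^ 2)) := by
      rw [← Real.exp_add, ← Real.exp_add]
      congr 1
      field_simp
      ring
    rw [hexp, abs_of_pos (Real.exp_pos z), smul_eq_mul]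
    by_cases hz : z ∈ Set.Ioi L
    · have hKlt : K < Real.exp z := by
        rw [hL] at hz; calc K = Real.exp (Real.log K) := (Real.exp_log hK).symm
        _ < Real.exp z := Real.exp_lt_exp.mpr hz
      rw [Set.indicator_of_mem hz, max_eq_left (by linarith)]
      have he : Real.exp z ≠ 0 := Real.exp_ne_zero z
      have hce : 1 / (Real.sqrt (2 * Real.pi) * Real.exp z * V) = c / Real.exp z := by
        rw [hc]; field_simp
      rw [hce]
      calc Real.exp z * ((Real.exp z - K) * (c / Real.exp z *
              Real.exp (-(z - m) ^ 2 / (2 * V ^ 2))))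
          = (Real.exp z * Real.exp (-(z - m) ^ 2 / (2 * V ^ 2))) * c
              - K * (c * Real.exp (-(z - m) ^ 2 / (2 * V ^ 2))) := by
            field_simp
        _ = Real.exp (m + V ^ 2 / 2) * (c * Real.exp (-(z - (m + V ^ 2)) ^ 2 / (2 * V ^ 2)))
              - K * (c * Real.exp (-(z - m) ^ 2 / (2 * V ^ 2))) := by rw [hsq]; ring
    · have hzle : z ≤ L := not_lt.mp hz
      have hKge : Real.exp z ≤ K := by
        rw [hL] at hzle
        calc Real.exp z ≤ Real.exp (Real.log K) := Real.exp_le_exp.mpr hzle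
        _ = K := Real.exp_log hK
      rw [Set.indicator_of_notMem hz, max_eq_right (by linarith)]
      ring
  simp_rw [key]
  rw [integral_indicator measurableSet_Ioi]
  have hint1 : IntegrableOn (fun z => Real.exp (m + V ^ 2 / 2) *
      (c * Real.exp (-(z - (m + V ^ 2)) ^ 2 / (2 * V ^ 2)))) (Set.Ioi L) :=
    (((gauss_integrable hV (m + V ^ 2)).const_mul c).const_mul _).integrableOn
  have hint2 : IntegrableOn (fun z => K * (c * Real.exp (-(z - m) ^ 2 / (2 * V ^ 2))))
      (Set.Ioi L) := (((gauss_integrable hV m).const_mul c).const_mul _).integrableOn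
  rw [integral_sub hint1 hint2]
  have e1 : ∫ z in Set.Ioi L, Real.exp (m + V ^ 2 / 2) *
      (c * Real.exp (-(z - (m + V ^ 2)) ^ 2 / (2 * V ^ 2)))
      = Real.exp (m + V ^ 2 / 2) * stdNormalCDF ((m + V ^ 2 - L) / V) := by
    rw [integral_const_mul]
    congr 1
    simp_rw [hc]
    exact gauss_integral_Ioi hV L (m + V ^ 2)
  have e2 : ∫ z in Set.Ioi L, K * (c * Real.exp (-(z - m) ^ 2 / (2 * V ^ 2)))
      = K * stdNormalCDF ((m - L) / V) := by
    rw [integral_const_mul]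
    congr 1
    simp_rw [hc]
    exact gauss_integral_Ioi hV L m
  rw [e1, e2]
  have hdiv : Real.log (S0 / K) = Real.log S0 - Real.log K := Real.log_div hS0.ne' hK.ne'
  have h1 : (m + V ^ 2 - L) / V = (Real.log (S0 / K) + μ * t + V ^ 2 / 2) / V := by
    rw [hdiv, hm, hL]; ring_nf
  have h2 : (m - L) / V = (Real.log (S0 / K) + μ * t + V ^ 2 / 2) / V - V := by
    rw [hdiv, hm, hL]; field_simp; ring
  have h3 : Real.exp (m + V ^ 2 / 2) = S0 * Real.exp (μ * t) := by
    rw [hm, show Real.log S0 + μ * t - V ^ 2 / 2 + V ^ 2 / 2 = Real.log S0 + μ * t by ring,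
      Real.exp_add, Real.exp_log hS0]
  rw [h1, h2, h3]
end

section
/- Let N ≥ 1, ρ ∈ ℝ, and for k, k' ∈ {1,…,N} let w_{kk'} ≥ 0 be weights not all zero and σ_1^k > 0, σ_2^{k'} > 0. Define the local correlation ρ_L = (ρ·Σ_{k,k'} w_{kk'} σ_1^k σ_2^{k'}) / √((Σ_{k,k'} w_{kk'} (σ_1^k)²)·(Σ_{k,k'} w_{kk'} (σ_2^{k'})²)). Then |ρ_L| ≤ |ρ|. In particular, with w_{kk'} = λ_1^k λ_2^{k'} ℓ̃^{(kk')}(x₁,x₂) for nonnegative mixture weights λ and strictly positive shifted bivariate lognormal densities ℓ̃^{(kk')}, the absolute value of the instantaneous local correlation of the shifted MVMD model is bounded by the absolute value of the instantaneous correlation parameter ρ of the shifted SCMD model. -/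
open Real

/-- The absolute value of the instantaneous local correlation of the (shifted) MVMD model
is bounded by the absolute value of the instantaneous correlation parameter `ρ`. -/
theorem mvmd_local_correlation_bound
    (N : ℕ) (hN : 1 ≤ N) (ρ : ℝ)
    (w : Fin N → Fin N → ℝ) (hw : ∀ k k', 0 ≤ w k k') (hwne : ∃ k k', w k k' ≠ 0)
    (σ1 σ2 : Fin N → ℝ) (hσ1 : ∀ k, 0 < σ1 k) (hσ2 : ∀ k', 0 < σ2 k') :
    |ρ * (∑ k, ∑ k', w k k' * σ1 k * σ2 k') /
        Real.sqrt ((∑ k, ∑ k', w k k' * (σ1 k) ^ 2) * (∑ k, ∑ k', w k k' * (σ2 k') ^ 2))|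
      ≤ |ρ| := by
  set S := ∑ k, ∑ k', w k k' * σ1 k * σ2 k' with hS
  set A := ∑ k, ∑ k', w k k' * (σ1 k) ^ 2 with hA
  set B := ∑ k, ∑ k', w k k' * (σ2 k') ^ 2 with hB
  obtain ⟨k0, k0', hk0⟩ := hwne
  have hwpos : 0 < w k0 k0' := lt_of_le_of_ne (hw k0 k0') (Ne.symm hk0)
  have hApos : 0 < A := by
    refine Finset.sum_pos' (fun k _ => Finset.sum_nonneg fun k' _ =>
      mul_nonneg (hw k k') (sq_nonneg _)) ⟨k0, Finset.mem_univ _, ?_⟩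
    refine Finset.sum_pos' (fun k' _ => mul_nonneg (hw k0 k') (sq_nonneg _))
      ⟨k0', Finset.mem_univ _, mul_pos hwpos (pow_pos (hσ1 k0) 2)⟩
  have hBpos : 0 < B := by
    refine Finset.sum_pos' (fun k _ => Finset.sum_nonneg fun k' _ =>
      mul_nonneg (hw k k') (sq_nonneg _)) ⟨k0, Finset.mem_univ _, ?_⟩
    refine Finset.sum_pos' (fun k' _ => mul_nonneg (hw k0 k') (sq_nonneg _))
      ⟨k0', Finset.mem_univ _, mul_pos hwpos (pow_pos (hσ2 k0') 2)⟩
  have hSnonneg : 0 ≤ S := Finset.sum_nonneg fun k _ => Finset.sum_nonneg fun k' _ =>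
    mul_nonneg (mul_nonneg (hw k k') (hσ1 k).le) (hσ2 k').le
  -- Cauchy–Schwarz over the product type
  have hCS : S ^ 2 ≤ A * B := by
    have h := Finset.sum_mul_sq_le_sq_mul_sq (Finset.univ : Finset (Fin N × Fin N))
      (fun p => Real.sqrt (w p.1 p.2) * σ1 p.1) (fun p => Real.sqrt (w p.1 p.2) * σ2 p.2)
    have e1 : (∑ p : Fin N × Fin N, (Real.sqrt (w p.1 p.2) * σ1 p.1) *
        (Real.sqrt (w p.1 p.2) * σ2 p.2)) = S := by
      rw [hS, ← Finset.sum_product']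
      refine Finset.sum_congr rfl fun p _ => ?_
      rw [mul_mul_mul_comm, Real.mul_self_sqrt (hw p.1 p.2), mul_assoc]
    have e2 : (∑ p : Fin N × Fin N, (Real.sqrt (w p.1 p.2) * σ1 p.1) ^ 2) = A := by
      rw [hA, ← Finset.sum_product']
      refine Finset.sum_congr rfl fun p _ => ?_
      rw [mul_pow, Real.sq_sqrt (hw p.1 p.2)]
    have e3 : (∑ p : Fin N × Fin N, (Real.sqrt (w p.1 p.2) * σ2 p.2) ^ 2) = B := by
      rw [hB, ← Finset.sum_product']
      refine Finset.sum_congr rfl fun p _ => ?_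
      rw [mul_pow, Real.sq_sqrt (hw p.1 p.2)]
    rw [e1, e2, e3] at h
    exact h
  have hSle : S ≤ Real.sqrt (A * B) := by
    rw [← Real.sqrt_sq hSnonneg]
    exact Real.sqrt_le_sqrt hCS
  have hsqrtpos : 0 < Real.sqrt (A * B) := Real.sqrt_pos.2 (mul_pos hApos hBpos)
  rw [abs_div, abs_mul, abs_of_nonneg hSnonneg, abs_of_pos hsqrtpos, div_le_iff₀ hsqrtpos]
  calc |ρ| * S ≤ |ρ| * Real.sqrt (A * B) := by
        exact mul_le_mul_of_nonneg_left hSle (abs_nonneg ρ)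
    _ = |ρ| * Real.sqrt (A * B) := rfl
end

section
/- Let μ ∈ ℝ, S0 > 0, N ≥ 1, let λ_1,…,λ_N ≥ 0 with Σ_k λ_k = 1, and let σ_1,…,σ_N : (0,∞) → ℝ be continuous with σ_k(s) ≥ σ̃ > 0 for all s and k. Define V_k(t) = (∫₀^t σ_k(s)² ds)^{1/2}, the lognormal densities ℓ^k_t(x) = (1/(√(2π)·x·V_k(t)))·exp(−(ln(x/S0) − μt + V_k(t)²/2)²/(2V_k(t)²)), the mixture p_t(x) = Σ_k λ_k ℓ^k_t(x), and the local volatility s(t,x) = ((Σ_k λ_k σ_k(t)² ℓ^k_t(x))/(Σ_k λ_k ℓ^k_t(x)))^{1/2} (assume at least one λ_k > 0). Then for all t > 0 and x > 0, ∂p_t(x)/∂t = −∂/∂x (μ·x·p_t(x)) + (1/2)·∂²/∂x² (s(t,x)²·x²·p_t(x)); i.e., the mixture of lognormal densities solves the Fokker–Planck equation associated with the LMD local volatility diffusion dS_t = μ S_t dt + s(t,S_t) S_t dW_t. -/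
open Real intervalIntegral

private lemma hda_w' (S0 m a : ℝ) (hS0 : 0 < S0) {ξ : ℝ} (hξ : 0 < ξ) :
    HasDerivAt (fun y : ℝ => Real.log (y / S0) - m + a / 2) ξ⁻¹ ξ := by
  have h1 : HasDerivAt (fun y : ℝ => y / S0) (1 / S0) ξ := by
    simpa using (hasDerivAt_id ξ).div_const S0
  have h2 := (h1.log (by positivity)).sub_const m |>.add_const (a / 2)
  refine h2.congr_deriv ?_
  field_simp

private lemma hda_E' (S0 m a : ℝ) (hS0 : 0 < S0) (ha : 0 < a) {ξ : ℝ} (hξ : 0 < ξ) :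
    HasDerivAt (fun y : ℝ => Real.exp (-(Real.log (y / S0) - m + a / 2) ^ 2 / (2 * a)))
      (-((Real.log (ξ / S0) - m + a / 2) / (a * ξ)) *
        Real.exp (-(Real.log (ξ / S0) - m + a / 2) ^ 2 / (2 * a))) ξ := by
  have h1 := (((hda_w' S0 m a hS0 hξ).pow 2).neg.div_const (2 * a)).exp
  refine h1.congr_deriv ?_
  simp only [Pi.neg_apply, Pi.pow_apply, Nat.cast_ofNat]
  field_simp
  ring

/-- x-derivative of `μ y ℓ`. -/
private lemma hda_drift' (μ S0 m a : ℝ) (hS0 : 0 < S0) (ha : 0 < a) {ξ : ℝ} (hξ : 0 < ξ) :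
    HasDerivAt (fun y : ℝ => μ * y *
        ((1 / (Real.sqrt (2 * Real.pi) * y * Real.sqrt a)) *
          Real.exp (-(Real.log (y / S0) - m + a / 2) ^ 2 / (2 * a))))
      (μ * (1 / (Real.sqrt (2 * Real.pi) * Real.sqrt a)) *
        (-((Real.log (ξ / S0) - m + a / 2) / (a * ξ))) *
        Real.exp (-(Real.log (ξ / S0) - m + a / 2) ^ 2 / (2 * a))) ξ := by
  have hsp : (0:ℝ) < Real.sqrt (2 * Real.pi) := Real.sqrt_pos.2 (by positivity)
  have hsa : (0:ℝ) < Real.sqrt a := Real.sqrt_pos.2 ha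
  have h1 := (hda_E' S0 m a hS0 ha hξ).const_mul
      (μ * (1 / (Real.sqrt (2 * Real.pi) * Real.sqrt a)))
  have h2 : HasDerivAt (fun y : ℝ => μ * (1 / (Real.sqrt (2 * Real.pi) * Real.sqrt a)) *
      Real.exp (-(Real.log (y / S0) - m + a / 2) ^ 2 / (2 * a)))
      (μ * (1 / (Real.sqrt (2 * Real.pi) * Real.sqrt a)) *
        (-((Real.log (ξ / S0) - m + a / 2) / (a * ξ))) *
        Real.exp (-(Real.log (ξ / S0) - m + a / 2) ^ 2 / (2 * a))) ξ := by
    refine h1.congr_deriv ?_; ring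
  refine h2.congr_of_eventuallyEq ?_
  refine Filter.eventuallyEq_of_mem (Ioi_mem_nhds hξ) (fun y hy => ?_)
  have hy0 : (0:ℝ) < y := hy
  field_simp

/-- x-derivative of `y² ℓ`. -/
private lemma hda_diff1' (S0 m a : ℝ) (hS0 : 0 < S0) (ha : 0 < a) {ξ : ℝ} (hξ : 0 < ξ) :
    HasDerivAt (fun y : ℝ => y ^ 2 *
        ((1 / (Real.sqrt (2 * Real.pi) * y * Real.sqrt a)) *
          Real.exp (-(Real.log (y / S0) - m + a / 2) ^ 2 / (2 * a))))
      ((1 / (Real.sqrt (2 * Real.pi) * Real.sqrt a)) *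
        Real.exp (-(Real.log (ξ / S0) - m + a / 2) ^ 2 / (2 * a)) *
        (1 - (Real.log (ξ / S0) - m + a / 2) / a)) ξ := by
  have hsp : (0:ℝ) < Real.sqrt (2 * Real.pi) := Real.sqrt_pos.2 (by positivity)
  have hsa : (0:ℝ) < Real.sqrt a := Real.sqrt_pos.2 ha
  have h1 := ((hasDerivAt_id ξ).mul (hda_E' S0 m a hS0 ha hξ)).const_mul
      (1 / (Real.sqrt (2 * Real.pi) * Real.sqrt a))
  have h2 : HasDerivAt (fun y : ℝ => (1 / (Real.sqrt (2 * Real.pi) * Real.sqrt a)) *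
      (y * Real.exp (-(Real.log (y / S0) - m + a / 2) ^ 2 / (2 * a))))
      ((1 / (Real.sqrt (2 * Real.pi) * Real.sqrt a)) *
        Real.exp (-(Real.log (ξ / S0) - m + a / 2) ^ 2 / (2 * a)) *
        (1 - (Real.log (ξ / S0) - m + a / 2) / a)) ξ := by
    refine h1.congr_deriv ?_
    simp only [id]
    field_simp
    ring
  refine h2.congr_of_eventuallyEq ?_
  refine Filter.eventuallyEq_of_mem (Ioi_mem_nhds hξ) (fun y hy => ?_)
  have hy0 : (0:ℝ) < y := hy
  field_simp

/-- second x-derivative: derivative of `D1`. -/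
private lemma hda_diff2' (S0 m a : ℝ) (hS0 : 0 < S0) (ha : 0 < a) {x : ℝ} (hx : 0 < x) :
    HasDerivAt (fun ξ : ℝ => (1 / (Real.sqrt (2 * Real.pi) * Real.sqrt a)) *
        Real.exp (-(Real.log (ξ / S0) - m + a / 2) ^ 2 / (2 * a)) *
        (1 - (Real.log (ξ / S0) - m + a / 2) / a))
      ((1 / (Real.sqrt (2 * Real.pi) * Real.sqrt a)) *
        (Real.exp (-(Real.log (x / S0) - m + a / 2) ^ 2 / (2 * a)) / (a * x)) *
        ((Real.log (x / S0) - m + a / 2) ^ 2 / a - (Real.log (x / S0) - m + a / 2) - 1)) x := by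
  have hsp : (0:ℝ) < Real.sqrt (2 * Real.pi) := Real.sqrt_pos.2 (by positivity)
  have hsa : (0:ℝ) < Real.sqrt a := Real.sqrt_pos.2 ha
  have h1 : HasDerivAt (fun ξ : ℝ => 1 - (Real.log (ξ / S0) - m + a / 2) / a)
      (-(x⁻¹ / a)) x := by
    have := ((hda_w' S0 m a hS0 hx).div_const a).const_sub 1
    simpa using this
  have h2 := (((hda_E' S0 m a hS0 ha hx).const_mul
      (1 / (Real.sqrt (2 * Real.pi) * Real.sqrt a))).mul h1)
  refine h2.congr_deriv ?_
  field_simp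
  ring

/-- time derivative of the lognormal density. -/
private lemma hda_time' (μ S0 x c : ℝ) (hS0 : 0 < S0) (hx : 0 < x)
    (A : ℝ → ℝ) (t : ℝ) (hA : HasDerivAt A c t) (ha : 0 < A t) :
    HasDerivAt (fun τ : ℝ => (1 / (Real.sqrt (2 * Real.pi) * x * Real.sqrt (A τ))) *
        Real.exp (-(Real.log (x / S0) - μ * τ + A τ / 2) ^ 2 / (2 * A τ)))
      ((1 / (Real.sqrt (2 * Real.pi) * x * Real.sqrt (A t))) *
        Real.exp (-(Real.log (x / S0) - μ * t + A t / 2) ^ 2 / (2 * A t)) *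
        (c * ((Real.log (x / S0) - μ * t + A t / 2) ^ 2 / (2 * (A t) ^ 2)
              - (Real.log (x / S0) - μ * t + A t / 2) / (2 * A t) - 1 / (2 * A t))
          + μ * (Real.log (x / S0) - μ * t + A t / 2) / A t)) t := by
  have hsp : (0:ℝ) < Real.sqrt (2 * Real.pi) := Real.sqrt_pos.2 (by positivity)
  have hsa : (0:ℝ) < Real.sqrt (A t) := Real.sqrt_pos.2 ha
  have hne : Real.sqrt (2 * Real.pi) * x * Real.sqrt (A t) ≠ 0 := by positivity
  have hf1 : HasDerivAt (fun τ : ℝ => Real.sqrt (2 * Real.pi) * x * Real.sqrt (A τ))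
      (Real.sqrt (2 * Real.pi) * x * (c / (2 * Real.sqrt (A t)))) t := by
    have := (hA.sqrt ha.ne').const_mul (Real.sqrt (2 * Real.pi) * x)
    simpa [mul_assoc] using this
  have hf2 := (hasDerivAt_const t (1:ℝ)).div hf1 hne
  have hw1 : HasDerivAt (fun τ : ℝ => μ * τ) μ t := by
    simpa using (hasDerivAt_id t).const_mul μ
  have hw : HasDerivAt (fun τ : ℝ => Real.log (x / S0) - μ * τ + A τ / 2) (-μ + c / 2) t :=
    (hw1.const_sub (Real.log (x / S0))).add (hA.div_const 2)
  have hden : HasDerivAt (fun τ : ℝ => 2 * A τ) (2 * c) t := by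
    simpa using hA.const_mul 2
  have hq := (((hw.pow 2).neg.div hden (by positivity)).exp)
  have h := hf2.mul hq
  refine h.congr_deriv ?_
  simp only [Pi.div_apply, Pi.neg_apply, Pi.pow_apply, Pi.mul_apply, Nat.cast_ofNat]
  have key : A t = Real.sqrt (A t) ^ 2 := (Real.sq_sqrt ha.le).symm
  set sa := Real.sqrt (A t)
  set w := Real.log (x / S0) - μ * t + A t / 2 with hw'
  rw [key] at hw' ⊢
  clear_value sa
  field_simp
  ring

/-- The mixture of lognormal densities solves the Fokker–Planck equation associated with
the LMD local-volatility diffusion `dS_t = μ S_t dt + s(t,S_t) S_t dW_t`. -/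
theorem lognormal_mixture_fokker_planck
    (μ S0 σlow : ℝ) (hS0 : 0 < S0) (hσlow : 0 < σlow)
    (N : ℕ) (hN : 1 ≤ N) (lam : Fin N → ℝ)
    (hlam : ∀ k, 0 ≤ lam k) (hsum : ∑ k, lam k = 1) (hpos : ∃ k, 0 < lam k)
    (σ : Fin N → ℝ → ℝ) (hσcont : ∀ k, ContinuousOn (σ k) (Set.Ioi 0))
    (hσ : ∀ k s, 0 < s → σlow ≤ σ k s)
    (V : Fin N → ℝ → ℝ) (hV : ∀ k t, V k t = Real.sqrt (∫ s in (0 : ℝ)..t, (σ k s) ^ 2))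
    (ℓ : Fin N → ℝ → ℝ → ℝ)
    (hℓ : ∀ k t x, ℓ k t x =
      (1 / (Real.sqrt (2 * Real.pi) * x * V k t)) *
        Real.exp (-(Real.log (x / S0) - μ * t + (V k t) ^ 2 / 2) ^ 2 / (2 * (V k t) ^ 2)))
    (p : ℝ → ℝ → ℝ) (hp : ∀ t x, p t x = ∑ k, lam k * ℓ k t x)
    (s : ℝ → ℝ → ℝ)
    (hs : ∀ t x, s t x =
      Real.sqrt ((∑ k, lam k * (σ k t) ^ 2 * ℓ k t x) / (∑ k, lam k * ℓ k t x))) :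
    ∀ t, 0 < t → ∀ x, 0 < x →
      deriv (fun τ => p τ x) t =
        -(deriv (fun y => μ * y * p t y) x)
          + (1 / 2) * deriv (deriv (fun y => (s t y) ^ 2 * y ^ 2 * p t y)) x := by
  intro t ht x hx
  -- nonnegativity of the accumulated variance
  have hInn : ∀ (k : Fin N) (τ : ℝ), 0 ≤ τ → 0 ≤ ∫ u in (0:ℝ)..τ, σ k u ^ 2 := by
    intro k τ hτ
    by_cases h : IntervalIntegrable (fun u => σ k u ^ 2) MeasureTheory.volume 0 τ
    · exact intervalIntegral.integral_nonneg hτ (fun u _ => sq_nonneg _)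
    · rw [intervalIntegral.integral_undef h]
  -- nonnegativity of the densities
  have hℓnn : ∀ (k : Fin N) (y : ℝ), 0 < y → 0 ≤ ℓ k t y := by
    intro k y hy
    rw [hℓ, hV]
    have h1 : (0:ℝ) ≤ Real.sqrt (∫ u in (0:ℝ)..t, σ k u ^ 2) := Real.sqrt_nonneg _
    have h2 : (0:ℝ) ≤ Real.sqrt (2 * Real.pi) := Real.sqrt_nonneg _
    positivity
  -- the local-volatility squared identity
  have hsq : ∀ y, 0 < y → s t y ^ 2 * y ^ 2 * p t y
      = ∑ k, lam k * σ k t ^ 2 * (y ^ 2 * ℓ k t y) := by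
    intro y hy
    rw [hs, hp]
    have hnum : (0:ℝ) ≤ ∑ k, lam k * σ k t ^ 2 * ℓ k t y :=
      Finset.sum_nonneg fun k _ => by
        have := hℓnn k y hy
        have := hlam k
        positivity
    have hden : (0:ℝ) ≤ ∑ k, lam k * ℓ k t y :=
      Finset.sum_nonneg fun k _ => mul_nonneg (hlam k) (hℓnn k y hy)
    rw [Real.sq_sqrt (div_nonneg hnum hden)]
    by_cases h : (∑ k, lam k * ℓ k t y) = 0
    · have heach : ∀ k ∈ Finset.univ, lam k * ℓ k t y = 0 :=
        (Finset.sum_eq_zero_iff_of_nonneg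
          (fun k _ => mul_nonneg (hlam k) (hℓnn k y hy))).1 h
      have hrhs0 : (∑ k, lam k * σ k t ^ 2 * (y ^ 2 * ℓ k t y)) = 0 :=
        Finset.sum_eq_zero fun k hk => by
          have h0 := heach k hk
          calc lam k * σ k t ^ 2 * (y ^ 2 * ℓ k t y)
              = y ^ 2 * σ k t ^ 2 * (lam k * ℓ k t y) := by ring
          _ = 0 := by rw [h0]; ring
      rw [h, hrhs0]
      simp
    · have hterm : (∑ k, lam k * σ k t ^ 2 * ℓ k t y) * y ^ 2
          = ∑ k, lam k * σ k t ^ 2 * (y ^ 2 * ℓ k t y) := by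
        rw [Finset.sum_mul]
        exact Finset.sum_congr rfl fun k _ => by ring
      rw [div_mul_eq_mul_div, div_mul_eq_mul_div, div_eq_iff h, hterm]
  -- per-component derivative data
  have key : ∀ k : Fin N, ∃ (T d D2 : ℝ) (D1 : ℝ → ℝ),
      HasDerivAt (fun τ => ℓ k τ x) T t ∧
      HasDerivAt (fun y => μ * y * ℓ k t y) d x ∧
      (∀ y, 0 < y → HasDerivAt (fun y' => y' ^ 2 * ℓ k t y') (D1 y) y) ∧
      HasDerivAt D1 D2 x ∧
      T = -d + (1 / 2) * σ k t ^ 2 * D2 := by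
    intro k
    by_cases hk : IntervalIntegrable (fun u => σ k u ^ 2) MeasureTheory.volume 0 t
    · -- nondegenerate case
      set a : ℝ := ∫ u in (0:ℝ)..t, σ k u ^ 2 with hadef
      have ha : 0 < a := by
        have hlow : ∫ u in (0:ℝ)..t, σlow ^ 2 ≤ a := by
          rw [hadef, intervalIntegral.integral_of_le ht.le,
            intervalIntegral.integral_of_le ht.le]
          refine MeasureTheory.setIntegral_mono_on ?_ ?_ measurableSet_Ioc ?_
          · exact (intervalIntegrable_iff_integrableOn_Ioc_of_le ht.le).1
              intervalIntegrable_const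
          · exact (intervalIntegrable_iff_integrableOn_Ioc_of_le ht.le).1 hk
          · intro u hu
            have h1 : σlow ≤ σ k u := hσ k u hu.1
            nlinarith [hσlow]
        have hconst : ∫ u in (0:ℝ)..t, σlow ^ 2 = σlow ^ 2 * t := by
          simp [mul_comm]
        rw [hconst] at hlow
        have : (0:ℝ) < σlow ^ 2 * t := by positivity
        linarith
    -- derivative of the accumulated variance
      have hAder : HasDerivAt (fun τ => ∫ u in (0:ℝ)..τ, σ k u ^ 2) (σ k t ^ 2) t := by
        refine intervalIntegral.integral_hasDerivAt_right hk ?_ ?_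
        · exact ((hσcont k).pow 2).stronglyMeasurableAtFilter isOpen_Ioi t ht
        · exact (((hσcont k).pow 2).continuousAt (isOpen_Ioi.mem_nhds ht))
      have ha2 : (V k t) ^ 2 = a := by rw [hV]; exact Real.sq_sqrt (hInn k t ht.le)
      have hℓt : ∀ y : ℝ, ℓ k t y = (1 / (Real.sqrt (2 * Real.pi) * y * Real.sqrt a)) *
          Real.exp (-(Real.log (y / S0) - μ * t + a / 2) ^ 2 / (2 * a)) := by
        intro y
        rw [hℓ, ha2, hV]
      have htime : HasDerivAt (fun τ => ℓ k τ x)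
          ((1 / (Real.sqrt (2 * Real.pi) * x * Real.sqrt a)) *
            Real.exp (-(Real.log (x / S0) - μ * t + a / 2) ^ 2 / (2 * a)) *
            (σ k t ^ 2 * ((Real.log (x / S0) - μ * t + a / 2) ^ 2 / (2 * a ^ 2)
                - (Real.log (x / S0) - μ * t + a / 2) / (2 * a) - 1 / (2 * a))
              + μ * (Real.log (x / S0) - μ * t + a / 2) / a)) t := by
        refine HasDerivAt.congr_of_eventuallyEq
          (hda_time' μ S0 x (σ k t ^ 2) hS0 hx
            (fun τ => ∫ u in (0:ℝ)..τ, σ k u ^ 2) t hAder ha) ?_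
        refine Filter.eventuallyEq_of_mem (Ioi_mem_nhds ht) (fun τ hτ => ?_)
        have hτ0 : (0:ℝ) < τ := hτ
        rw [hℓ, hV, Real.sq_sqrt (hInn k τ hτ0.le)]
      have hdrift : HasDerivAt (fun y => μ * y * ℓ k t y)
          (μ * (1 / (Real.sqrt (2 * Real.pi) * Real.sqrt a)) *
            (-((Real.log (x / S0) - μ * t + a / 2) / (a * x))) *
            Real.exp (-(Real.log (x / S0) - μ * t + a / 2) ^ 2 / (2 * a))) x := by
        have hfun1 : (fun y => μ * y * ℓ k t y)
            = fun y => μ * y * ((1 / (Real.sqrt (2 * Real.pi) * y * Real.sqrt a)) *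
              Real.exp (-(Real.log (y / S0) - μ * t + a / 2) ^ 2 / (2 * a))) :=
          funext fun y => by rw [hℓt y]
        rw [hfun1]
        exact hda_drift' μ S0 (μ * t) a hS0 ha hx
      have hdiff1 : ∀ y, 0 < y → HasDerivAt (fun y' => y' ^ 2 * ℓ k t y')
          ((1 / (Real.sqrt (2 * Real.pi) * Real.sqrt a)) *
            Real.exp (-(Real.log (y / S0) - μ * t + a / 2) ^ 2 / (2 * a)) *
            (1 - (Real.log (y / S0) - μ * t + a / 2) / a)) y := by
        intro y hy
        have hfun2 : (fun y' : ℝ => y' ^ 2 * ℓ k t y')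
            = fun y' => y' ^ 2 * ((1 / (Real.sqrt (2 * Real.pi) * y' * Real.sqrt a)) *
              Real.exp (-(Real.log (y' / S0) - μ * t + a / 2) ^ 2 / (2 * a))) :=
          funext fun y' => by rw [hℓt y']
        rw [hfun2]
        exact hda_diff1' S0 (μ * t) a hS0 ha hy
      refine ⟨_, _, _, _, htime, hdrift, hdiff1,
        hda_diff2' S0 (μ * t) a hS0 ha hx, ?_⟩
      -- the pointwise PDE identity for a single component
      have hsp : (0:ℝ) < Real.sqrt (2 * Real.pi) := Real.sqrt_pos.2 (by positivity)
      have hsa : (0:ℝ) < Real.sqrt a := Real.sqrt_pos.2 ha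
      field_simp
      ring
    · -- degenerate case: the density vanishes identically near t
      have hzero : ∀ τ, t / 2 < τ → (∫ u in (0:ℝ)..τ, σ k u ^ 2) = 0 := by
        intro τ hτ
        apply intervalIntegral.integral_undef
        intro hc
        rcases le_or_gt t τ with hle | hlt
        · refine hk (hc.mono_set ?_)
          rw [Set.uIcc_of_le ht.le, Set.uIcc_of_le (by linarith)]
          exact Set.Icc_subset_Icc le_rfl hle
        · have h2 : IntervalIntegrable (fun u => σ k u ^ 2) MeasureTheory.volume τ t := by
            apply ContinuousOn.intervalIntegrable
            apply ((hσcont k).pow 2).mono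
            rw [Set.uIcc_of_le hlt.le]
            intro u hu
            have : (0:ℝ) < u := by
              have := hu.1; linarith
            exact this
          exact hk (hc.trans h2)
      have hℓτ : ∀ τ, t / 2 < τ → ∀ y : ℝ, ℓ k τ y = 0 := by
        intro τ hτ y
        rw [hℓ, hV, hzero τ hτ, Real.sqrt_zero]
        simp
      have hℓt0 : ∀ y : ℝ, ℓ k t y = 0 := hℓτ t (by linarith)
      refine ⟨0, 0, 0, fun _ => 0, ?_, ?_, ?_, hasDerivAt_const x 0, by simp⟩
      · refine (hasDerivAt_const t (0:ℝ)).congr_of_eventuallyEq ?_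
        refine Filter.eventuallyEq_of_mem (Ioi_mem_nhds (by linarith : t / 2 < t))
          (fun τ hτ => ?_)
        exact hℓτ τ hτ x
      · have : (fun y : ℝ => μ * y * ℓ k t y) = fun _ => 0 := by
          funext y; rw [hℓt0 y]; ring
        rw [this]; exact hasDerivAt_const x 0
      · intro y hy
        have : (fun y' : ℝ => y' ^ 2 * ℓ k t y') = fun _ => 0 := by
          funext y'; rw [hℓt0 y']; ring
        rw [this]; exact hasDerivAt_const y 0
  choose T d D2 D1 hT hd hD1 hD1x hid using key
  -- left-hand side
  have e1 : deriv (fun τ => p τ x) t = ∑ k, lam k * T k := by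
    have hfun : (fun τ => p τ x) = fun τ => ∑ k, lam k * ℓ k τ x :=
      funext fun τ => hp τ x
    rw [hfun]
    exact (HasDerivAt.fun_sum fun k _ => (hT k).const_mul (lam k)).deriv
  -- drift term
  have e2 : deriv (fun y => μ * y * p t y) x = ∑ k, lam k * d k := by
    have hfun : (fun y => μ * y * p t y) = fun y => ∑ k, lam k * (μ * y * ℓ k t y) := by
      funext y
      rw [hp, Finset.mul_sum]
      exact Finset.sum_congr rfl fun k _ => by ring
    rw [hfun]
    exact (HasDerivAt.fun_sum fun k _ => (hd k).const_mul (lam k)).deriv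
  -- diffusion term
  have e3 : deriv (deriv fun y => s t y ^ 2 * y ^ 2 * p t y) x
      = ∑ k, lam k * σ k t ^ 2 * D2 k := by
    have hG : ∀ y, 0 < y → HasDerivAt
        (fun y' => ∑ k, lam k * σ k t ^ 2 * (y' ^ 2 * ℓ k t y'))
        (∑ k, lam k * σ k t ^ 2 * D1 k y) y :=
      fun y hy => HasDerivAt.fun_sum fun k _ => (hD1 k y hy).const_mul _
    have hEv : deriv (fun y => s t y ^ 2 * y ^ 2 * p t y)
        =ᶠ[nhds x] fun y => ∑ k, lam k * σ k t ^ 2 * D1 k y := by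
      refine Filter.eventually_of_mem (Ioi_mem_nhds hx) (fun y hy => ?_)
      have hy0 : (0:ℝ) < y := hy
      have hEq : (fun y' => s t y' ^ 2 * y' ^ 2 * p t y')
          =ᶠ[nhds y] fun y' => ∑ k, lam k * σ k t ^ 2 * (y' ^ 2 * ℓ k t y') :=
        Filter.eventuallyEq_of_mem (Ioi_mem_nhds hy0) (fun y' hy' => hsq y' hy')
      rw [hEq.deriv_eq, (hG y hy0).deriv]
    rw [hEv.deriv_eq]
    exact (HasDerivAt.fun_sum fun k _ => (hD1x k).const_mul (lam k * σ k t ^ 2)).deriv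
  rw [e1, e2, e3]
  have : ∑ k, lam k * T k
      = ∑ k, (-(lam k * d k) + (1 / 2) * (lam k * σ k t ^ 2 * D2 k)) :=
    Finset.sum_congr rfl fun k _ => by rw [hid k]; ring
  rw [this, Finset.sum_add_distrib, Finset.sum_neg_distrib, ← Finset.mul_sum]
end

section
/- For all real numbers a, b and every ρ ∈ [−1,1], the inequality (e^{ρab} − 1)² ≤ ρ²·(e^{a²} − 1)·(e^{b²} − 1) holds. Consequently, the terminal correlation of two jointly lognormal variables — which equals (e^{ρ s₁ s₂} − 1)/√((e^{s₁²} − 1)(e^{s₂²} − 1)) when the underlying Gaussians have standard deviations s₁, s₂ and correlation ρ — is always smaller in absolute value than the absolute value of the instantaneous correlation ρ. -/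
open Real Finset Filter

private lemma tendsto_exp_partial (x : ℝ) :
    Tendsto (fun N => ∑ n ∈ Finset.range N, x ^ n / (n.factorial : ℝ)) atTop
      (nhds (Real.exp x)) := by
  rw [Real.exp_eq_exp_ℝ, NormedSpace.exp_eq_tsum_div]
  exact (NormedSpace.expSeries_div_summable (𝔸 := ℝ) x).hasSum.tendsto_sum_nat

private lemma sum_shift (x : ℝ) (N : ℕ) :
    ∑ n ∈ Finset.range N, x ^ (n + 1) / ((n + 1).factorial : ℝ) =
      (∑ k ∈ Finset.range (N + 1), x ^ k / (k.factorial : ℝ)) - 1 := by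
  rw [Finset.sum_range_succ' (fun k => x ^ k / (k.factorial : ℝ)) N]
  simp

private lemma partial_le (y : ℝ) (hy : 0 ≤ y) (N : ℕ) :
    ∑ n ∈ Finset.range N, y ^ (n + 1) / ((n + 1).factorial : ℝ) ≤ Real.exp y - 1 := by
  rw [sum_shift]
  have := Real.sum_le_exp_of_nonneg hy (N + 1)
  linarith [Real.sum_le_exp_of_nonneg hy (N + 1)]

/-- Core series Cauchy–Schwarz inequality for nonnegative data. -/
private lemma core (r c d : ℝ) (hr0 : 0 ≤ r) (hr1 : r ≤ 1) (hc : 0 ≤ c) (hd : 0 ≤ d) :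
    (Real.exp (r * c * d) - 1) ^ 2 ≤ r ^ 2 * (Real.exp (c ^ 2) - 1) * (Real.exp (d ^ 2) - 1) := by
  have key : ∀ N : ℕ,
      (∑ n ∈ Finset.range N, (r * c * d) ^ (n + 1) / (((n + 1).factorial : ℕ) : ℝ)) ^ 2 ≤
        r ^ 2 * (Real.exp (c ^ 2) - 1) * (Real.exp (d ^ 2) - 1) := by
    intro N
    set f : ℕ → ℝ := fun n => r * c ^ (n + 1) / Real.sqrt ((n + 1).factorial : ℝ) with hf
    set g : ℕ → ℝ := fun n => r ^ n * d ^ (n + 1) / Real.sqrt ((n + 1).factorial : ℝ) with hg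
    have hfac : ∀ n : ℕ, (0:ℝ) < ((n + 1).factorial : ℝ) := fun n => by
      exact_mod_cast Nat.factorial_pos (n + 1)
    have hs : ∀ n : ℕ, Real.sqrt ((n + 1).factorial : ℝ) * Real.sqrt ((n + 1).factorial : ℝ)
        = (((n + 1).factorial : ℕ) : ℝ) := fun n => Real.mul_self_sqrt (hfac n).le
    have hfg : ∀ n : ℕ, f n * g n = (r * c * d) ^ (n + 1) / (((n + 1).factorial : ℕ) : ℝ) := by
      intro n
      rw [hf, hg]
      simp only
      rw [div_mul_div_comm, hs n, mul_pow, mul_pow]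
      ring_nf
    have hCS := Finset.sum_mul_sq_le_sq_mul_sq (Finset.range N) f g
    have hsum : ∑ n ∈ Finset.range N, f n * g n =
        ∑ n ∈ Finset.range N, (r * c * d) ^ (n + 1) / (((n + 1).factorial : ℕ) : ℝ) :=
      Finset.sum_congr rfl fun n _ => hfg n
    have hf2 : ∀ n : ℕ, f n ^ 2 = r ^ 2 * ((c ^ 2) ^ (n + 1) / (((n + 1).factorial : ℕ) : ℝ)) := by
      intro n
      rw [hf]
      simp only
      rw [div_pow, Real.sq_sqrt (hfac n).le, mul_pow, ← pow_mul]
      ring_nf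
    have hg2 : ∀ n : ℕ, g n ^ 2 ≤ (d ^ 2) ^ (n + 1) / (((n + 1).factorial : ℕ) : ℝ) := by
      intro n
      rw [hg]
      simp only
      rw [div_pow, Real.sq_sqrt (hfac n).le, mul_pow, ← pow_mul, ← pow_mul]
      have h1 : r ^ (n * 2) ≤ 1 := pow_le_one₀ hr0 hr1
      have h2 : (0:ℝ) ≤ d ^ ((n + 1) * 2) := by positivity
      calc r ^ (n * 2) * d ^ ((n + 1) * 2) / (((n + 1).factorial : ℕ) : ℝ)
          ≤ 1 * d ^ ((n + 1) * 2) / (((n + 1).factorial : ℕ) : ℝ) := by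
            gcongr
        _ = (d ^ 2) ^ (n + 1) / (((n + 1).factorial : ℕ) : ℝ) := by
            rw [← pow_mul]; ring_nf
    have hfsum : ∑ n ∈ Finset.range N, f n ^ 2 ≤ r ^ 2 * (Real.exp (c ^ 2) - 1) := by
      rw [Finset.sum_congr rfl fun n _ => hf2 n, ← Finset.mul_sum]
      have := partial_le (c ^ 2) (by positivity) N
      nlinarith [sq_nonneg r]
    have hgsum : ∑ n ∈ Finset.range N, g n ^ 2 ≤ Real.exp (d ^ 2) - 1 := by
      calc ∑ n ∈ Finset.range N, g n ^ 2
          ≤ ∑ n ∈ Finset.range N, (d ^ 2) ^ (n + 1) / (((n + 1).factorial : ℕ) : ℝ) :=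
            Finset.sum_le_sum fun n _ => hg2 n
        _ ≤ Real.exp (d ^ 2) - 1 := partial_le (d ^ 2) (by positivity) N
    have hfnonneg : 0 ≤ ∑ n ∈ Finset.range N, f n ^ 2 :=
      Finset.sum_nonneg fun n _ => sq_nonneg _
    calc (∑ n ∈ Finset.range N, (r * c * d) ^ (n + 1) / (((n + 1).factorial : ℕ) : ℝ)) ^ 2
        = (∑ n ∈ Finset.range N, f n * g n) ^ 2 := by rw [hsum]
      _ ≤ (∑ n ∈ Finset.range N, f n ^ 2) * ∑ n ∈ Finset.range N, g n ^ 2 := hCS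
      _ ≤ (r ^ 2 * (Real.exp (c ^ 2) - 1)) * (Real.exp (d ^ 2) - 1) := by
          have hgnonneg : 0 ≤ ∑ n ∈ Finset.range N, g n ^ 2 :=
            Finset.sum_nonneg fun n _ => sq_nonneg _
          have hc1 : 1 ≤ Real.exp (c ^ 2) := Real.one_le_exp (by positivity)
          exact mul_le_mul hfsum hgsum hgnonneg (by nlinarith [sq_nonneg r])
      _ = r ^ 2 * (Real.exp (c ^ 2) - 1) * (Real.exp (d ^ 2) - 1) := by ring
  -- pass to the limit
  have hx : 0 ≤ r * c * d := by positivity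
  have htend : Tendsto
      (fun N => (∑ n ∈ Finset.range N, (r * c * d) ^ (n + 1) / (((n + 1).factorial : ℕ) : ℝ)) ^ 2)
      atTop (nhds ((Real.exp (r * c * d) - 1) ^ 2)) := by
    have h1 : Tendsto
        (fun N => ∑ n ∈ Finset.range N, (r * c * d) ^ (n + 1) / (((n + 1).factorial : ℕ) : ℝ))
        atTop (nhds (Real.exp (r * c * d) - 1)) := by
      simp only [sum_shift]
      exact ((tendsto_exp_partial (r * c * d)).comp (tendsto_add_atTop_nat 1)).sub
        tendsto_const_nhds
    exact h1.pow 2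
  exact le_of_tendsto htend (Filter.Eventually.of_forall key)

private lemma abs_exp_sub_one_le (x : ℝ) : |Real.exp x - 1| ≤ Real.exp |x| - 1 := by
  rcases abs_cases x with ⟨h1, h2⟩ | ⟨h1, h2⟩
  · rw [h1, abs_of_nonneg (by linarith [Real.one_le_exp h2] : (0:ℝ) ≤ Real.exp x - 1)]
  · rw [h1, abs_sub_comm, abs_of_nonneg (by linarith [Real.exp_le_one_iff.mpr h2.le] : 0 ≤ 1 - Real.exp x)]
    have hmul : Real.exp x * Real.exp (-x) = 1 := by
      rw [← Real.exp_add]; simp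
    nlinarith [sq_nonneg (Real.exp x - 1), Real.exp_pos x, Real.exp_pos (-x)]

/-- Cauchy–Schwarz-type inequality `(e^{ρab} - 1)² ≤ ρ²(e^{a²} - 1)(e^{b²} - 1)`;
consequently the terminal correlation of two jointly lognormal variables is bounded in
absolute value by the absolute value of the instantaneous correlation `ρ`. -/
theorem terminal_correlation_le_instantaneous
    (a b ρ : ℝ) (hρ : ρ ∈ Set.Icc (-1 : ℝ) 1) :
    (Real.exp (ρ * a * b) - 1) ^ 2 ≤ ρ ^ 2 * (Real.exp (a ^ 2) - 1) * (Real.exp (b ^ 2) - 1)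
    ∧
    ∀ s₁ s₂ : ℝ, 0 < s₁ → 0 < s₂ →
      |(Real.exp (ρ * s₁ * s₂) - 1) /
          Real.sqrt ((Real.exp (s₁ ^ 2) - 1) * (Real.exp (s₂ ^ 2) - 1))| ≤ |ρ| := by
  obtain ⟨hρ1, hρ2⟩ := hρ
  have habs : |ρ| ≤ 1 := abs_le.mpr ⟨hρ1, hρ2⟩
  have main : ∀ x y : ℝ, (Real.exp (ρ * x * y) - 1) ^ 2 ≤
      ρ ^ 2 * (Real.exp (x ^ 2) - 1) * (Real.exp (y ^ 2) - 1) := by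
    intro x y
    have hcore := core |ρ| |x| |y| (abs_nonneg ρ) habs (abs_nonneg x) (abs_nonneg y)
    have h1 : |Real.exp (ρ * x * y) - 1| ≤ Real.exp (|ρ| * |x| * |y|) - 1 := by
      calc |Real.exp (ρ * x * y) - 1| ≤ Real.exp |ρ * x * y| - 1 := abs_exp_sub_one_le _
        _ = Real.exp (|ρ| * |x| * |y|) - 1 := by rw [abs_mul, abs_mul]
    have h2 : (Real.exp (ρ * x * y) - 1) ^ 2 ≤ (Real.exp (|ρ| * |x| * |y|) - 1) ^ 2 := by
      rw [← sq_abs (Real.exp (ρ * x * y) - 1)]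
      exact pow_le_pow_left₀ (abs_nonneg _) h1 2
    calc (Real.exp (ρ * x * y) - 1) ^ 2 ≤ (Real.exp (|ρ| * |x| * |y|) - 1) ^ 2 := h2
      _ ≤ |ρ| ^ 2 * (Real.exp (|x| ^ 2) - 1) * (Real.exp (|y| ^ 2) - 1) := hcore
      _ = ρ ^ 2 * (Real.exp (x ^ 2) - 1) * (Real.exp (y ^ 2) - 1) := by
          rw [sq_abs, sq_abs, sq_abs]
  refine ⟨main a b, fun s₁ s₂ h₁ h₂ => ?_⟩
  have hD1 : 0 < Real.exp (s₁ ^ 2) - 1 := by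
    have hpos : (0:ℝ) < s₁ ^ 2 := by positivity
    linarith [Real.add_one_lt_exp hpos.ne']
  have hD2 : 0 < Real.exp (s₂ ^ 2) - 1 := by
    have hpos : (0:ℝ) < s₂ ^ 2 := by positivity
    linarith [Real.add_one_lt_exp hpos.ne']
  have hD : 0 < (Real.exp (s₁ ^ 2) - 1) * (Real.exp (s₂ ^ 2) - 1) := mul_pos hD1 hD2
  have hsD : 0 < Real.sqrt ((Real.exp (s₁ ^ 2) - 1) * (Real.exp (s₂ ^ 2) - 1)) :=
    Real.sqrt_pos.mpr hD
  rw [abs_div, abs_of_nonneg hsD.le, div_le_iff₀ hsD]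
  have := main s₁ s₂
  have hnum : |Real.exp (ρ * s₁ * s₂) - 1| =
      Real.sqrt ((Real.exp (ρ * s₁ * s₂) - 1) ^ 2) := (Real.sqrt_sq_eq_abs _).symm
  rw [hnum]
  calc Real.sqrt ((Real.exp (ρ * s₁ * s₂) - 1) ^ 2)
      ≤ Real.sqrt (ρ ^ 2 * (Real.exp (s₁ ^ 2) - 1) * (Real.exp (s₂ ^ 2) - 1)) :=
        Real.sqrt_le_sqrt this
    _ = |ρ| * Real.sqrt ((Real.exp (s₁ ^ 2) - 1) * (Real.exp (s₂ ^ 2) - 1)) := by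
        rw [mul_assoc, Real.sqrt_mul (by positivity), Real.sqrt_sq_eq_abs]
end
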